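/- With $c_j(\alpha) = \frac{1}{j!}\sum_{m=0}^{j} \binom{j}{m} \frac{(\alpha+1/2)_m (\alpha)_m (-\alpha)_{j-m}}{(1/2)_m}$ and $\alpha \in (0,1)$, one has $c_j(\alpha) \geq 0$ for every $j \geq 1$. -/

import Mathlib

open Finset

/-- The coefficient `c_j(α)` from the expansion of
`(1-v)^α ₂F₁(1/2+α, α, 1/2; v)`. -/
noncomputable def cCoeff (j : ℕ) (α : ℝ) : ℝ :=
  (1 / (j.factorial : ℝ)) *
    ∑ m ∈ Finset.range (j + 1),
      (j.choose m : ℝ) *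
        ((ascPochhammer ℝ m).eval (α + 1 / 2) * (ascPochhammer ℝ m).eval α *
            (ascPochhammer ℝ (j - m)).eval (-α) / (ascPochhammer ℝ m).eval (1 / 2))

/-- Vandermonde identity for rising factorials, antidiagonal form. -/
lemma ascPochhammer_add_eval (x y : ℝ) : ∀ k : ℕ,
    (ascPochhammer ℝ k).eval (x + y) = ∑ ij ∈ Finset.HasAntidiagonal.antidiagonal k,
      (k.choose ij.1 : ℝ) *
        ((ascPochhammer ℝ ij.1).eval x * (ascPochhammer ℝ ij.2).eval y)
  | 0 => by simp
  | (k + 1) => by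
    rw [ascPochhammer_succ_eval, ascPochhammer_add_eval x y k,
      Finset.sum_antidiagonal_choose_succ_mul
        (fun i j => (ascPochhammer ℝ i).eval x * (ascPochhammer ℝ j).eval y) k,
      Finset.sum_mul, ← Finset.sum_add_distrib]
    refine Finset.sum_congr rfl fun ij hij => ?_
    have h : ij.1 + ij.2 = k := Finset.HasAntidiagonal.mem_antidiagonal.mp hij
    rw [ascPochhammer_succ_eval, ascPochhammer_succ_eval,
      ← Nat.choose_symm_of_eq_add h.symm]
    have hk : (k : ℝ) = (ij.1 : ℝ) + (ij.2 : ℝ) := by exact_mod_cast h.symm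
    rw [hk]; ring

/-- Vandermonde identity for rising factorials, range form. -/
lemma ascPochhammer_add_eval' (x y : ℝ) (k : ℕ) :
    (ascPochhammer ℝ k).eval (x + y) = ∑ m ∈ Finset.range (k + 1),
      (k.choose m : ℝ) *
        ((ascPochhammer ℝ m).eval x * (ascPochhammer ℝ (k - m)).eval y) := by
  rw [ascPochhammer_add_eval, Finset.Nat.sum_antidiagonal_eq_sum_range_succ_mk]

theorem stmt12 (α : ℝ) (hα : α ∈ Set.Ioo (0 : ℝ) 1) (j : ℕ) (hj : 1 ≤ j) :
    0 ≤ cCoeff j α := by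
  obtain ⟨hα0, hα1⟩ := hα
  -- abbreviations
  set A : ℕ → ℝ := fun m => (ascPochhammer ℝ m).eval (α + 1 / 2) with hA
  set H : ℕ → ℝ := fun m => (ascPochhammer ℝ m).eval (1 / 2) with hH
  set P : ℕ → ℝ := fun m => (ascPochhammer ℝ m).eval α with hP
  set Q : ℕ → ℝ := fun m => (ascPochhammer ℝ m).eval (-α) with hQ
  have hApos : ∀ m, 0 < A m := fun m => ascPochhammer_pos m _ (by linarith)
  have hHpos : ∀ m, 0 < H m := fun m => ascPochhammer_pos m _ (by norm_num)
  have hPpos : ∀ m, 0 < P m := fun m => ascPochhammer_pos m _ hα0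
  -- Q k ≤ 0 for k ≥ 1
  have hQnonpos : ∀ k : ℕ, 1 ≤ k → Q k ≤ 0 := by
    intro k hk
    induction k with
    | zero => omega
    | succ n ih =>
      rcases Nat.eq_zero_or_pos n with hn | hn
      · subst hn
        simp only [hQ, zero_add, ascPochhammer_one, Polynomial.eval_X]
        linarith
      · have h1 : Q (n + 1) = Q n * (-α + n) := by
          simp only [hQ]; rw [ascPochhammer_succ_eval]
        rw [h1]
        have : (0:ℝ) ≤ -α + n := by
          have : (1:ℝ) ≤ (n:ℝ) := by exact_mod_cast hn
          linarith
        exact mul_nonpos_of_nonpos_of_nonneg (ih hn) this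
  -- the ratio R m = A m / H m is monotone
  set R : ℕ → ℝ := fun m => A m / H m with hR
  have hRmono : Monotone R := by
    apply monotone_nat_of_le_succ
    intro m
    have hAs : A (m + 1) = A m * (α + 1 / 2 + m) := by
      simp only [hA]; rw [ascPochhammer_succ_eval]
    have hHs : H (m + 1) = H m * (1 / 2 + m) := by
      simp only [hH]; rw [ascPochhammer_succ_eval]
    rw [hR]
    simp only
    have hpos : (0:ℝ) < H m * (1 / 2 + m) := by
      have : (0:ℝ) < 1 / 2 + m := by positivity
      exact mul_pos (hHpos m) this
    rw [hAs, hHs, div_le_div_iff₀ (hHpos m) hpos]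
    nlinarith [mul_nonneg (mul_nonneg (hApos m).le (hHpos m).le) hα0.le]
  have hRpos : ∀ m, 0 < R m := fun m => div_pos (hApos m) (hHpos m)
  -- Vandermonde at y = -α gives total zero
  have hvd : ∑ m ∈ Finset.range (j + 1),
      (j.choose m : ℝ) * (P m * Q (j - m)) = 0 := by
    have := ascPochhammer_add_eval' α (-α) j
    rw [add_neg_cancel] at this
    rw [ascPochhammer_eval_zero, if_neg (show j ≠ 0 by omega)] at this
    simp only [hP, hQ]
    exact this.symm
  -- termwise bound
  have key : ∀ m ∈ Finset.range (j + 1),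
      R j * ((j.choose m : ℝ) * (P m * Q (j - m))) ≤
        (j.choose m : ℝ) *
          (A m * P m * Q (j - m) / H m) := by
    intro m hm
    have hmle : m ≤ j := by
      simpa [Nat.lt_succ_iff] using Finset.mem_range.mp hm
    have heq : (j.choose m : ℝ) * (A m * P m * Q (j - m) / H m)
        = R m * ((j.choose m : ℝ) * (P m * Q (j - m))) := by
      rw [hR]; field_simp
    rw [heq]
    rcases eq_or_lt_of_le hmle with hmj | hmj
    · subst hmj; rfl
    · have hg : (j.choose m : ℝ) * (P m * Q (j - m)) ≤ 0 := by
        have hq : Q (j - m) ≤ 0 := hQnonpos _ (by omega)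
        have : P m * Q (j - m) ≤ 0 :=
          mul_nonpos_of_nonneg_of_nonpos (hPpos m).le hq
        exact mul_nonpos_of_nonneg_of_nonpos (by positivity) this
      exact mul_le_mul_of_nonpos_right (hRmono hmle) hg
  have hsum : 0 ≤ ∑ m ∈ Finset.range (j + 1),
      (j.choose m : ℝ) * (A m * P m * Q (j - m) / H m) := by
    calc (0:ℝ) = R j * ∑ m ∈ Finset.range (j + 1),
          (j.choose m : ℝ) * (P m * Q (j - m)) := by rw [hvd, mul_zero]
      _ = ∑ m ∈ Finset.range (j + 1),
          R j * ((j.choose m : ℝ) * (P m * Q (j - m))) := by rw [Finset.mul_sum]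
      _ ≤ _ := Finset.sum_le_sum key
  unfold cCoeff
  have hfac : (0:ℝ) < (j.factorial : ℝ) := by positivity
  exact mul_nonneg (by positivity) hsum
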